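/- Let R be a commutative ring, q ∈ R, A an associative unital R-algebra, and a, b ∈ A satisfying the q-commutation relation a*b - q•(b*a) = 1. Then for all natural numbers n and m: (b*a)^{n+m} = \sum_{j=0}^{m} \sum_{k=0}^{n} (S_q(m,j) * C(n,k) * ([j]_q)^{n-k} * q^{j*k}) • (b^j * (b*a)^k * a^j) (with the convention 0^0 = 1). -/

import Mathlib

/-- The q-integer [n]_q. -/
def qInt {R : Type*} [CommRing R] (q : R) (n : ℕ) : R :=
  ∑ i ∈ Finset.range n, q ^ i

/-- The q-Stirling numbers of the second kind. -/
def qStirling {R : Type*} [CommRing R] (q : R) : ℕ → ℕ → R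
  | 0, 0 => 1
  | 0, _ + 1 => 0
  | _ + 1, 0 => 0
  | n + 1, k + 1 => q ^ k * qStirling q n k + qInt q (k + 1) * qStirling q n (k + 1)

section Aux

variable {R : Type*} [CommRing R] (q : R) {A : Type*} [Ring A]
    [Algebra R A] (a b : A)

private lemma qb_l1 (h : a * b - q • (b * a) = 1) : a * b = q • (b * a) + 1 := by
  rw [← h]; abel

private lemma qb_lA (h : a * b - q • (b * a) = 1) (j : ℕ) :
    a * b ^ (j+1) = q^(j+1) • (b^(j+1) * a) + qInt q (j+1) • b ^ j := by
  induction j with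
  | zero => simpa [qInt] using qb_l1 q a b h
  | succ j ih =>
    have e1 : a * b ^ (j+2) = (a * b ^ (j+1)) * b := by
      rw [mul_assoc, ← pow_succ]
    have hq : qInt q (j+2) = qInt q (j+1) + q^(j+1) := by
      simp [qInt, Finset.sum_range_succ]
    have e2 : b ^ (j+1) * (b * a) = b ^ (j + 2) * a := by
      rw [← mul_assoc, ← pow_succ]
    rw [e1, ih, add_mul, smul_mul_assoc, smul_mul_assoc, mul_assoc, ← pow_succ,
      qb_l1 q a b h, hq]
    simp only [mul_add, mul_one, smul_add, mul_smul_comm, smul_smul, e2]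
    match_scalars <;> ring

private lemma qb_lB (h : a * b - q • (b * a) = 1) (j : ℕ) :
    (b * a) * b ^ j = b ^ j * (q ^ j • (b * a) + qInt q j • 1) := by
  cases j with
  | zero => simp [qInt]
  | succ j =>
    have e0 : (b * a) * b ^ (j+1) = b * (a * b ^ (j+1)) := by rw [mul_assoc]
    have e2 : b * (b ^ (j+1) * a) = b ^ (j+1) * (b * a) := by
      rw [← mul_assoc, ← pow_succ', pow_succ, mul_assoc]
    have e3 : b * b ^ j = b ^ (j+1) := by rw [← pow_succ']
    rw [e0, qb_lA q a b h j]
    simp only [mul_add, mul_smul_comm, e2, e3, mul_one]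

private lemma qb_lC (h : a * b - q • (b * a) = 1) (n j : ℕ) :
    (b * a) ^ n * b ^ j = b ^ j * (q ^ j • (b * a) + qInt q j • 1) ^ n := by
  induction n with
  | zero => simp
  | succ n ih =>
    rw [pow_succ, mul_assoc, qb_lB q a b h j, ← mul_assoc, ih, mul_assoc, ← pow_succ]

private lemma qb_lExpand (j n : ℕ) :
    (q ^ j • (b * a) + qInt q j • (1:A)) ^ n =
      ∑ k ∈ Finset.range (n+1),
        ((n.choose k : R) * qInt q j ^ (n-k) * q ^ (j*k)) • (b * a) ^ k := by
  have hc : Commute (q ^ j • (b * a)) (qInt q j • (1:A)) :=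
    (Commute.one_right _).smul_right _
  rw [hc.add_pow]
  refine Finset.sum_congr rfl fun k _ => ?_
  have hcast : ((n.choose k : ℕ) : A) = ((n.choose k : R)) • (1:A) := by
    rw [← Algebra.algebraMap_eq_smul_one, map_natCast]
  rw [smul_pow, smul_pow, one_pow, hcast]
  simp only [smul_mul_assoc, mul_smul_comm, mul_one, smul_smul, ← pow_mul]
  congr 1
  ring

private lemma qb_SZero : ∀ m k : ℕ, m < k → qStirling q m k = 0 := by
  intro m
  induction m with
  | zero => intro k hk; obtain ⟨k, rfl⟩ := Nat.exists_eq_add_of_lt hk; simp [qStirling]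
  | succ m ih =>
    intro k hk
    match k, hk with
    | k + 1, hk =>
      rw [qStirling, ih k (by omega), ih (k+1) (by omega)]
      ring

private lemma qb_lD (h : a * b - q • (b * a) = 1) (m : ℕ) :
    (b * a) ^ m = ∑ j ∈ Finset.range (m+1), qStirling q m j • (b ^ j * a ^ j) := by
  induction m with
  | zero => simp [qStirling]
  | succ m ih =>
    have step : ∀ j : ℕ, (b * a) * (b ^ j * a ^ j) =
        q ^ j • (b ^ (j+1) * a ^ (j+1)) + qInt q j • (b ^ j * a ^ j) := by
      intro j
      have e : b ^ j * (b * a) * a ^ j = b ^ (j+1) * a ^ (j+1) := by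
        rw [pow_succ, pow_succ' a j]; simp only [mul_assoc]
      rw [← mul_assoc, qb_lB q a b h j, mul_add, add_mul]
      simp only [mul_smul_comm, smul_mul_assoc, mul_one, e]
    rw [pow_succ', ih, Finset.mul_sum]
    simp only [mul_smul_comm, step, smul_add, smul_smul]
    rw [Finset.sum_add_distrib, Finset.sum_range_succ' _ (m+1)]
    have h0 : qStirling q (m+1) 0 = 0 := rfl
    have hrec : ∀ j : ℕ, qStirling q (m+1) (j+1) =
        q ^ j * qStirling q m j + qInt q (j+1) * qStirling q m (j+1) := fun j => rfl
    simp only [h0, zero_smul, add_zero, hrec, add_smul]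
    rw [Finset.sum_add_distrib]
    congr 1
    · exact Finset.sum_congr rfl fun j _ => by rw [mul_comm]
    · rw [Finset.sum_range_succ' _ m]
      have h00 : qInt q 0 = 0 := by simp [qInt]
      rw [h00]
      simp only [mul_zero, zero_smul, add_zero]
      rw [Finset.sum_range_succ, qb_SZero q m (m+1) (by omega)]
      simp only [mul_zero, zero_smul, add_zero]
      exact Finset.sum_congr rfl fun j _ => by rw [mul_comm]

end Aux

/-- Operator form of the q-Spivey formula. -/
theorem qBoson_spivey_operator {R : Type*} [CommRing R] (q : R) {A : Type*} [Ring A]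
    [Algebra R A] (a b : A) (h : a * b - q • (b * a) = 1) (n m : ℕ) :
    (b * a) ^ (n + m) =
      ∑ j ∈ Finset.range (m + 1), ∑ k ∈ Finset.range (n + 1),
        (qStirling q m j * (Nat.choose n k : R) * (qInt q j) ^ (n - k) * q ^ (j * k)) •
          (b ^ j * (b * a) ^ k * a ^ j) := by
  rw [pow_add, qb_lD q a b h m, Finset.mul_sum]
  refine Finset.sum_congr rfl fun j _ => ?_
  rw [mul_smul_comm, ← mul_assoc, qb_lC q a b h n j, qb_lExpand q a b j n,
    Finset.mul_sum, Finset.sum_mul, Finset.smul_sum]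
  refine Finset.sum_congr rfl fun k _ => ?_
  simp only [mul_smul_comm, smul_mul_assoc, smul_smul]
  congr 1
  ring
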